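/- Let k ≥ 1 be an integer, let i be an integer with −k < i < k, and let s ∈ O_E^×. The orbit of the point [1 : π^i s] under the right action of the principal congruence subgroup Γ_k on P^1(E) is exactly the set {[1 : π^i s u] : u ∈ 1 + π^{min(k−i, k+i)} O_E}. -/

import Mathlib

noncomputable section

open Matrix

/-- A surjective discrete (rank-one) valuation on a field `E`, written additively.
This is the algebraic structure of a nonarchimedean local field used in the statements. -/
structure DiscreteVal (E : Type) [Field E] : Type where
  v : E → ℤ
  v_mul : ∀ x y : E, x ≠ 0 → y ≠ 0 → v (x * y) = v x + v y
  v_min_le_add : ∀ x y : E, x ≠ 0 → y ≠ 0 → x + y ≠ 0 → min (v x) (v y) ≤ v (x + y)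
  surj : ∀ n : ℤ, ∃ x : E, x ≠ 0 ∧ v x = n

namespace DiscreteVal

variable {E : Type} [Field E]

/-- The valuation ring `O_E = {x : x = 0 or v x ≥ 0}`. -/
def O (ν : DiscreteVal E) : Set E := {x : E | x = 0 ∨ 0 ≤ ν.v x}

/-- `π` is a uniformizer: `π ≠ 0` and `v π = 1`. -/
def IsUniformizer (ν : DiscreteVal E) (π : E) : Prop := π ≠ 0 ∧ ν.v π = 1

/-- The set `π^m · O_E` for `m : ℤ`. -/
def ball (ν : DiscreteVal E) (π : E) (m : ℤ) : Set E :=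
  {y : E | ∃ z ∈ ν.O, y = π ^ m * z}

end DiscreteVal

section ProjLine

variable {E : Type} [Field E]

/-- The point `[a : b]` of the projective line over `E`. -/
def projPt (a b : E) (h : a ≠ 0 ∨ b ≠ 0) : Projectivization E (Fin 2 → E) :=
  Projectivization.mk E ![a, b] (by
    intro hc
    rcases h with h | h
    · exact h (by simpa using congrFun hc 0)
    · exact h (by simpa using congrFun hc 1))

/-- The point `∞ = [0 : 1]`. -/
def inftyPt (E : Type) [Field E] : Projectivization E (Fin 2 → E) :=
  projPt 0 1 (Or.inr one_ne_zero)

/-- The point `[1 : t]`. -/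
def onePt (t : E) : Projectivization E (Fin 2 → E) :=
  projPt 1 t (Or.inl one_ne_zero)

theorem vecMulLinear_injective (g : SpecialLinearGroup (Fin 2) E) :
    Function.Injective (g.1.vecMulLinear) := by
  intro x y hxy
  have h1 : x ᵥ* g.1 = y ᵥ* g.1 := by
    simpa [Matrix.vecMulLinear_apply] using hxy
  have h3 : g.1 * (g⁻¹).1 = 1 := by
    rw [← Matrix.SpecialLinearGroup.coe_mul, mul_inv_cancel, Matrix.SpecialLinearGroup.coe_one]
  calc x = x ᵥ* (g.1 * (g⁻¹).1) := by rw [h3, Matrix.vecMul_one]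
    _ = (x ᵥ* g.1) ᵥ* (g⁻¹).1 := (Matrix.vecMul_vecMul x g.1 (g⁻¹).1).symm
    _ = (y ᵥ* g.1) ᵥ* (g⁻¹).1 := by rw [h1]
    _ = y ᵥ* (g.1 * (g⁻¹).1) := Matrix.vecMul_vecMul y g.1 (g⁻¹).1
    _ = y := by rw [h3, Matrix.vecMul_one]

/-- The right action `[w] · g := [w ᵥ* g]` of `SL₂(E)` on the projective line
(rows vectors times matrix). -/
def ract (x : Projectivization E (Fin 2 → E)) (g : SpecialLinearGroup (Fin 2) E) :
    Projectivization E (Fin 2 → E) :=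
  Projectivization.map (g.1.vecMulLinear) (vecMulLinear_injective g) x

/-- The orbit of `x` under a set `Γ` of elements of `SL₂(E)` (acting on the right). -/
def orbitOf (Γ : Set (SpecialLinearGroup (Fin 2) E))
    (x : Projectivization E (Fin 2 → E)) : Set (Projectivization E (Fin 2 → E)) :=
  {y | ∃ g ∈ Γ, y = ract x g}

variable (ν : DiscreteVal E) (π : E)

/-- The principal congruence subgroup `Γ_k` of level `k` (as a subset of `SL₂(E)`):
integral matrices congruent to the identity modulo `π^k`. -/
def congrSub (k : ℕ) : Set (SpecialLinearGroup (Fin 2) E) :=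
  {g | ∀ i j, g.1 i j - (1 : Matrix (Fin 2) (Fin 2) E) i j ∈ ν.ball π (k : ℤ)}

/-- The maximal compact subgroup `U = SL₂(O_E)` (as a subset of `SL₂(E)`). -/
def slIntegral : Set (SpecialLinearGroup (Fin 2) E) :=
  {g | ∀ i j, g.1 i j ∈ ν.O}

/-- The Iwahori subgroup `Γ₀` (as a subset): integral matrices whose
lower-left entry lies in `πO_E`. -/
def iwahori : Set (SpecialLinearGroup (Fin 2) E) :=
  {g | (∀ i j, g.1 i j ∈ ν.O) ∧ g.1 1 0 ∈ ν.ball π 1}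

/-- The subgroup `U' = diag(1,π) SL₂(O_E) diag(1,π)⁻¹` (as a subset), described
by entry conditions. -/
def slConj : Set (SpecialLinearGroup (Fin 2) E) :=
  {g | g.1 0 0 ∈ ν.O ∧ g.1 1 1 ∈ ν.O ∧ g.1 0 1 ∈ ν.ball π (-1) ∧ g.1 1 0 ∈ ν.ball π 1}

end ProjLine

/-! ### Auxiliary valuation lemmas -/

namespace DiscreteVal

variable {E : Type} [Field E] (ν : DiscreteVal E)

lemma v_one' : ν.v 1 = 0 := by
  have := ν.v_mul 1 1 one_ne_zero one_ne_zero
  simp at this; linarith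

lemma v_neg_one' : ν.v (-1) = 0 := by
  have := ν.v_mul (-1) (-1) (by norm_num) (by norm_num)
  simp [ν.v_one'] at this; linarith

lemma v_neg' (x : E) (hx : x ≠ 0) : ν.v (-x) = ν.v x := by
  have := ν.v_mul (-1) x (by norm_num) hx
  simpa [ν.v_neg_one'] using this

lemma v_inv' (x : E) (hx : x ≠ 0) : ν.v x⁻¹ = - ν.v x := by
  have := ν.v_mul x x⁻¹ hx (inv_ne_zero hx)
  rw [mul_inv_cancel₀ hx, ν.v_one'] at this
  linarith

lemma v_pow' (x : E) (hx : x ≠ 0) (n : ℕ) : ν.v (x ^ n) = n * ν.v x := by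
  induction n with
  | zero => simp [ν.v_one']
  | succ n ih =>
    rw [pow_succ, ν.v_mul _ _ (pow_ne_zero n hx) hx, ih]
    push_cast; ring

lemma v_zpow' (x : E) (hx : x ≠ 0) (n : ℤ) : ν.v (x ^ n) = n * ν.v x := by
  rcases le_or_gt 0 n with h | h
  · lift n to ℕ using h
    rw [zpow_natCast, ν.v_pow' x hx]
  · have h1 : x ^ n = (x ^ (-n).toNat)⁻¹ := by
      rw [← zpow_natCast, Int.toNat_of_nonneg (by omega), _root_.zpow_neg, inv_inv]
    rw [h1, ν.v_inv' _ (pow_ne_zero _ hx), ν.v_pow' x hx]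
    rw [Int.toNat_of_nonneg (by omega)]; ring

variable {π : E}

lemma mem_ball_iff' (hπ : ν.IsUniformizer π) {m : ℤ} {y : E} :
    y ∈ ν.ball π m ↔ y = 0 ∨ m ≤ ν.v y := by
  constructor
  · rintro ⟨z, hz, rfl⟩
    by_cases hz0 : z = 0
    · left; rw [hz0]; ring
    · right
      have hvz : 0 ≤ ν.v z := by
        rcases hz with rfl | hz
        · exact absurd rfl hz0
        · exact hz
      rw [ν.v_mul _ _ (zpow_ne_zero _ hπ.1) hz0, ν.v_zpow' _ hπ.1, hπ.2]
      omega
  · rintro (rfl | h)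
    · exact ⟨0, Or.inl rfl, by ring⟩
    · refine ⟨π ^ (-m) * y, ?_, ?_⟩
      · by_cases hy : y = 0
        · exact Or.inl (by simp [hy])
        · right
          rw [ν.v_mul _ _ (zpow_ne_zero _ hπ.1) hy, ν.v_zpow' _ hπ.1, hπ.2]
          omega
      · rw [← mul_assoc, ← zpow_add₀ hπ.1]
        simp

lemma v_add_cases' {m : ℤ} {x y : E} (hx : x = 0 ∨ m ≤ ν.v x) (hy : y = 0 ∨ m ≤ ν.v y) :
    x + y = 0 ∨ m ≤ ν.v (x + y) := by
  by_cases hx0 : x = 0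
  · subst hx0; simpa using hy
  by_cases hy0 : y = 0
  · subst hy0; simpa using hx
  by_cases hxy : x + y = 0
  · exact Or.inl hxy
  · right
    have := ν.v_min_le_add x y hx0 hy0 hxy
    have h1 := hx.resolve_left hx0
    have h2 := hy.resolve_left hy0
    omega

lemma v_neg_cases' {m : ℤ} {x : E} (hx : x = 0 ∨ m ≤ ν.v x) :
    -x = 0 ∨ m ≤ ν.v (-x) := by
  by_cases hx0 : x = 0
  · left; simp [hx0]
  · right; rw [ν.v_neg' x hx0]; exact hx.resolve_left hx0

lemma v_sub_cases' {m : ℤ} {x y : E} (hx : x = 0 ∨ m ≤ ν.v x) (hy : y = 0 ∨ m ≤ ν.v y) :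
    x - y = 0 ∨ m ≤ ν.v (x - y) := by
  rw [sub_eq_add_neg]
  exact ν.v_add_cases' hx (ν.v_neg_cases' hy)

/-- `1 + ε` is a unit of valuation zero when `v ε ≥ 1`. -/
lemma one_add_small' {ε : E} (hε : ε = 0 ∨ 1 ≤ ν.v ε) :
    1 + ε ≠ 0 ∧ ν.v (1 + ε) = 0 := by
  by_cases hε0 : ε = 0
  · subst hε0; simp [ν.v_one']
  have h1 : 1 ≤ ν.v ε := hε.resolve_left hε0
  have hne : 1 + ε ≠ 0 := by
    intro h
    have : ε = -1 := by linear_combination h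
    rw [this, ν.v_neg_one'] at h1; omega
  refine ⟨hne, ?_⟩
  have hlb := ν.v_min_le_add 1 ε one_ne_zero hε0 hne
  rw [ν.v_one'] at hlb
  have hub : min (ν.v (1 + ε)) (ν.v (-ε)) ≤ ν.v 1 := by
    have h2 : (1 + ε) + (-ε) = 1 := by ring
    have := ν.v_min_le_add (1 + ε) (-ε) hne (neg_ne_zero.2 hε0) (by rw [h2]; exact one_ne_zero)
    rwa [h2] at this
  rw [ν.v_one', ν.v_neg' ε hε0] at hub
  omega

end DiscreteVal

/-! ### Computation of the right action on `[1 : t]` -/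

lemma ract_onePt' {E : Type} [Field E] (t : E) (g : SpecialLinearGroup (Fin 2) E)
    (hD : g.1 0 0 + t * g.1 1 0 ≠ 0) :
    ract (onePt t) g = onePt ((g.1 0 1 + t * g.1 1 1) / (g.1 0 0 + t * g.1 1 0)) := by
  unfold ract onePt projPt
  rw [Projectivization.map_mk]
  rw [Projectivization.mk_eq_mk_iff]
  refine ⟨Units.mk0 (g.1 0 0 + t * g.1 1 0) hD, ?_⟩
  funext j
  fin_cases j <;>
    simp [Matrix.vecMulLinear_apply, Matrix.vecMul, dotProduct, Fin.sum_univ_two,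
      Units.smul_def, Units.mk0] <;>
    field_simp <;> ring

/-! ### Main theorem -/

theorem congrSub_orbit_of_middle
    {E : Type} [Field E] (ν : DiscreteVal E) (π : E) (hπ : ν.IsUniformizer π)
    (k : ℕ) (hk : 1 ≤ k) (i : ℤ) (hi₁ : -(k : ℤ) < i) (hi₂ : i < (k : ℤ))
    (s : E) (hs₀ : s ≠ 0) (hs : ν.v s = 0) :
    orbitOf (congrSub ν π k) (onePt (π ^ i * s)) =
      {y | ∃ u : E, u - 1 ∈ ν.ball π (min ((k : ℤ) - i) ((k : ℤ) + i)) ∧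
        y = onePt (π ^ i * s * u)} := by
  obtain ⟨hπ0, hπ1⟩ := hπ
  have hπ' : ν.IsUniformizer π := ⟨hπ0, hπ1⟩
  set t : E := π ^ i * s with ht
  have ht0 : t ≠ 0 := mul_ne_zero (zpow_ne_zero _ hπ0) hs₀
  have hvt : ν.v t = i := by
    rw [ht, ν.v_mul _ _ (zpow_ne_zero _ hπ0) hs₀, ν.v_zpow' _ hπ0, hπ1, hs]; ring
  set m : ℤ := min ((k : ℤ) - i) ((k : ℤ) + i) with hm
  have hm1 : 1 ≤ m := by omega
  have hmk : m ≤ (k : ℤ) := by omega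
  ext y
  simp only [orbitOf, Set.mem_setOf_eq]
  constructor
  · rintro ⟨g, hg, rfl⟩
    have h00 : g.1 0 0 - 1 ∈ ν.ball π (k : ℤ) := by simpa [Matrix.one_apply] using hg 0 0
    have h01 : g.1 0 1 ∈ ν.ball π (k : ℤ) := by simpa [Matrix.one_apply] using hg 0 1
    have h10 : g.1 1 0 ∈ ν.ball π (k : ℤ) := by simpa [Matrix.one_apply] using hg 1 0
    have h11 : g.1 1 1 - 1 ∈ ν.ball π (k : ℤ) := by simpa [Matrix.one_apply] using hg 1 1
    rw [ν.mem_ball_iff' hπ'] at h00 h01 h10 h11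
    set A := g.1 0 0; set B := g.1 0 1; set C := g.1 1 0; set Dd := g.1 1 1
    -- bounds with m
    have hA : A - 1 = 0 ∨ m ≤ ν.v (A - 1) := by
      rcases h00 with h | h
      · exact Or.inl h
      · exact Or.inr (le_trans hmk h)
    have hDd : Dd - 1 = 0 ∨ m ≤ ν.v (Dd - 1) := by
      rcases h11 with h | h
      · exact Or.inl h
      · exact Or.inr (le_trans hmk h)
    have htC : t * C = 0 ∨ m ≤ ν.v (t * C) := by
      by_cases hC : C = 0
      · left; simp [hC]
      · right
        rw [ν.v_mul _ _ ht0 hC, hvt]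
        have := h10.resolve_left hC
        omega
    have hBt : B * t⁻¹ = 0 ∨ m ≤ ν.v (B * t⁻¹) := by
      by_cases hB : B = 0
      · left; simp [hB]
      · right
        rw [ν.v_mul _ _ hB (inv_ne_zero ht0), ν.v_inv' _ ht0, hvt]
        have := h01.resolve_left hB
        omega
    set ε₂ : E := (A - 1) + t * C with hε₂def
    set ε₁ : E := B * t⁻¹ + (Dd - 1) with hε₁def
    have hε₂ : ε₂ = 0 ∨ m ≤ ν.v ε₂ := ν.v_add_cases' hA htC
    have hε₁ : ε₁ = 0 ∨ m ≤ ν.v ε₁ := ν.v_add_cases' hBt hDd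
    have hε₂1 : ε₂ = 0 ∨ 1 ≤ ν.v ε₂ := by
      rcases hε₂ with h | h
      · exact Or.inl h
      · exact Or.inr (le_trans hm1 h)
    obtain ⟨hDne, hDv⟩ := ν.one_add_small' hε₂1
    have hDeq : A + t * C = 1 + ε₂ := by rw [hε₂def]; ring
    have hNeq : B + t * Dd = t * (1 + ε₁) := by
      rw [hε₁def]; field_simp; ring
    have hD0 : A + t * C ≠ 0 := by rw [hDeq]; exact hDne
    rw [ract_onePt' t g hD0]
    refine ⟨(1 + ε₁) * (1 + ε₂)⁻¹, ?_, ?_⟩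
    · rw [ν.mem_ball_iff' hπ']
      have heq : (1 + ε₁) * (1 + ε₂)⁻¹ - 1 = (ε₁ - ε₂) * (1 + ε₂)⁻¹ := by
        field_simp
        ring
      rw [heq]
      by_cases hd : ε₁ - ε₂ = 0
      · left; rw [hd]; ring
      · right
        rw [ν.v_mul _ _ hd (inv_ne_zero hDne), ν.v_inv' _ hDne, hDv]
        have := (ν.v_sub_cases' hε₁ hε₂).resolve_left hd
        omega
    · congr 1
      rw [hNeq, hDeq]
      field_simp
  · rintro ⟨u, hu, rfl⟩
    rw [ν.mem_ball_iff' hπ'] at hu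
    have hu1 : u - 1 = 0 ∨ 1 ≤ ν.v (u - 1) := by
      rcases hu with h | h
      · exact Or.inl h
      · exact Or.inr (le_trans hm1 h)
    have hu' : u ≠ 0 ∧ ν.v u = 0 := by
      have := ν.one_add_small' hu1
      have he : 1 + (u - 1) = u := by ring
      rwa [he] at this
    rcases le_or_gt 0 i with hipos | hineg
    · -- upper triangular
      have hdet : (!![1, t * (u - 1); 0, 1] : Matrix (Fin 2) (Fin 2) E).det = 1 := by
        simp [Matrix.det_fin_two_of]
      refine ⟨⟨!![1, t * (u - 1); 0, 1], hdet⟩, ?_, ?_⟩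
      · have hb : t * (u - 1) ∈ ν.ball π (k : ℤ) := by
          rw [ν.mem_ball_iff' hπ']
          by_cases hu0 : u - 1 = 0
          · left; rw [hu0]; ring
          · right
            rw [ν.v_mul _ _ ht0 hu0, hvt]
            have := hu.resolve_left hu0
            omega
        have hb0 : (0 : E) ∈ ν.ball π (k : ℤ) := (ν.mem_ball_iff' hπ').2 (Or.inl rfl)
        intro a b
        fin_cases a <;> fin_cases b <;>
          simp [Matrix.one_apply] <;>
          first
            | exact hb0
            | exact hb
            | (exact (ν.mem_ball_iff' hπ').2 (Or.inl (by ring)))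
            | skip
      · have hD0 : (1 : E) + t * 0 ≠ 0 := by simp
        have := ract_onePt' t ⟨!![1, t * (u - 1); 0, 1], hdet⟩ (by simpa using hD0)
        rw [this]
        · congr 1
          simp only [Matrix.SpecialLinearGroup.coe_mk, Matrix.cons_val', Matrix.cons_val_zero,
            Matrix.cons_val_one, Matrix.head_cons, Matrix.empty_val',
            Matrix.cons_val_fin_one, Matrix.of_apply, Matrix.head_fin_const]
          field_simp; ring
    · -- lower triangular
      have hc : u⁻¹ - 1 = 0 ∨ m ≤ ν.v (u⁻¹ - 1) := by
        by_cases hu0 : u - 1 = 0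
        · left; rw [sub_eq_zero.1 hu0]; simp
        · right
          have heq : u⁻¹ - 1 = -(u - 1) * u⁻¹ := by
            rw [neg_sub, sub_mul, one_mul, mul_inv_cancel₀ hu'.1]
          have hne : u⁻¹ - 1 ≠ 0 := by
            rw [heq]
            exact mul_ne_zero (neg_ne_zero.2 hu0) (inv_ne_zero hu'.1)
          rw [heq, ν.v_mul _ _ (neg_ne_zero.2 hu0) (inv_ne_zero hu'.1),
            ν.v_neg' _ hu0, ν.v_inv' _ hu'.1, hu'.2]
          have := hu.resolve_left hu0
          omega
      have hdet : (!![1, 0; (u⁻¹ - 1) / t, 1] : Matrix (Fin 2) (Fin 2) E).det = 1 := by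
        simp [Matrix.det_fin_two_of]
      refine ⟨⟨!![1, 0; (u⁻¹ - 1) / t, 1], hdet⟩, ?_, ?_⟩
      · have hb : (u⁻¹ - 1) / t ∈ ν.ball π (k : ℤ) := by
          rw [ν.mem_ball_iff' hπ']
          by_cases hne : u⁻¹ - 1 = 0
          · left; rw [hne]; ring
          · right
            have h := hc.resolve_left hne
            rw [div_eq_mul_inv, ν.v_mul _ _ hne (inv_ne_zero ht0), ν.v_inv' _ ht0, hvt]
            omega
        have hb0 : (0 : E) ∈ ν.ball π (k : ℤ) := (ν.mem_ball_iff' hπ').2 (Or.inl rfl)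
        intro a b
        fin_cases a <;> fin_cases b <;>
          simp [Matrix.one_apply] <;>
          first
            | exact hb0
            | exact hb
            | (exact (ν.mem_ball_iff' hπ').2 (Or.inl (by ring)))
            | skip
      · have hD0' : (1 : E) + t * ((u⁻¹ - 1) / t) ≠ 0 := by
          rw [mul_div_cancel₀ _ ht0]
          rw [show (1 : E) + (u⁻¹ - 1) = u⁻¹ by ring]
          exact inv_ne_zero hu'.1
        have := ract_onePt' t ⟨!![1, 0; (u⁻¹ - 1) / t, 1], hdet⟩ (by simpa using hD0')
        rw [this]
        · congr 1
          simp only [Matrix.SpecialLinearGroup.coe_mk, Matrix.cons_val', Matrix.cons_val_zero,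
            Matrix.cons_val_one, Matrix.head_cons, Matrix.empty_val',
            Matrix.cons_val_fin_one, Matrix.of_apply, Matrix.head_fin_const]
          rw [mul_div_cancel₀ _ ht0]
          rw [show (0 : E) + t * 1 = t by ring, show (1 : E) + (u⁻¹ - 1) = u⁻¹ by ring,
            div_eq_mul_inv, inv_inv]
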